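/- If Θ is a convex bounded subset of the strictly positive orthant in R^d invariant under permutations of coordinates, then ‖w‖_Θ = sqrt(inf_{θ∈Θ} Σ_i w_i²/θ_i) is a symmetric gauge function: a norm invariant under coordinate permutations and sign changes. -/

import Mathlib

noncomputable def thetaNorm {d : ℕ} (Θ : Set (Fin d → ℝ)) (w : Fin d → ℝ) : ℝ :=
  Real.sqrt (⨅ θ : Θ, ∑ i, w i ^ 2 / (θ : Fin d → ℝ) i)

private lemma engel_aux (a b x y : ℝ) (hx : 0 < x) (hy : 0 < y) :
    (a + b) ^ 2 / (x + y) ≤ a ^ 2 / x + b ^ 2 / y := by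
  rw [div_add_div _ _ hx.ne' hy.ne', div_le_div_iff₀ (by positivity) (by positivity)]
  nlinarith [sq_nonneg (a * y - b * x), mul_pos hx hy]

private lemma sqrt_add_le_aux (x y : ℝ) (hx : 0 ≤ x) (hy : 0 ≤ y) :
    Real.sqrt (x + y) ≤ Real.sqrt x + Real.sqrt y := by
  have h1 := Real.sq_sqrt hx
  have h2 := Real.sq_sqrt hy
  have h3 := Real.sqrt_nonneg x
  have h4 := Real.sqrt_nonneg y
  rw [show x + y = Real.sqrt x ^ 2 + Real.sqrt y ^ 2 by rw [h1, h2]]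
  calc Real.sqrt (Real.sqrt x ^ 2 + Real.sqrt y ^ 2)
      ≤ Real.sqrt ((Real.sqrt x + Real.sqrt y) ^ 2) := by
        apply Real.sqrt_le_sqrt; nlinarith [mul_nonneg h3 h4]
    _ = Real.sqrt x + Real.sqrt y := Real.sqrt_sq (by positivity)

theorem theta_norm_symmetric_gauge {d : ℕ} (Θ : Set (Fin d → ℝ)) (hne : Θ.Nonempty)
    (hconv : Convex ℝ Θ) (hbdd : Bornology.IsBounded Θ)
    (hpos : ∀ θ ∈ Θ, ∀ i, 0 < θ i)
    (hperm : ∀ σ : Equiv.Perm (Fin d), ∀ θ ∈ Θ, (θ ∘ σ) ∈ Θ) :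
    (∀ w, thetaNorm Θ w = 0 ↔ w = 0) ∧
    (∀ (a : ℝ) (w : Fin d → ℝ), thetaNorm Θ (a • w) = |a| * thetaNorm Θ w) ∧
    (∀ v w : Fin d → ℝ, thetaNorm Θ (v + w) ≤ thetaNorm Θ v + thetaNorm Θ w) ∧
    (∀ (w : Fin d → ℝ) (σ : Equiv.Perm (Fin d)), thetaNorm Θ (w ∘ σ) = thetaNorm Θ w) ∧
    (∀ (w ε : Fin d → ℝ), (∀ i, ε i = 1 ∨ ε i = -1) →
      thetaNorm Θ (fun i => ε i * w i) = thetaNorm Θ w) := by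
  haveI : Nonempty Θ := hne.to_subtype
  set F : (Fin d → ℝ) → (Fin d → ℝ) → ℝ := fun w θ => ∑ i, w i ^ 2 / θ i with hF
  have hFnonneg : ∀ (w : Fin d → ℝ), ∀ θ ∈ Θ, 0 ≤ F w θ := fun w θ hθ =>
    Finset.sum_nonneg fun i _ => div_nonneg (sq_nonneg _) (hpos θ hθ i).le
  have hbddbelow : ∀ w : Fin d → ℝ, BddBelow (Set.range fun θ : Θ => F w θ) := by
    intro w
    exact ⟨0, by rintro _ ⟨θ, rfl⟩; exact hFnonneg w θ θ.2⟩
  have hinf_nonneg : ∀ w : Fin d → ℝ, 0 ≤ ⨅ θ : Θ, F w θ := fun w =>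
    le_ciInf fun θ => hFnonneg w θ θ.2
  have hinf_le : ∀ (w : Fin d → ℝ) (θ : Fin d → ℝ), θ ∈ Θ → (⨅ θ : Θ, F w θ) ≤ F w θ := by
    intro w θ hθ
    exact ciInf_le (hbddbelow w) ⟨θ, hθ⟩
  have hTN : ∀ w : Fin d → ℝ, thetaNorm Θ w = Real.sqrt (⨅ θ : Θ, F w θ) := fun w => rfl
  obtain ⟨M, hM⟩ := Bornology.IsBounded.exists_norm_le hbdd
  refine ⟨?_, ?_, ?_, ?_, ?_⟩
  · -- definiteness
    intro w
    constructor
    · intro h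
      by_contra hw
      obtain ⟨i, hi⟩ : ∃ i, w i ≠ 0 := by
        by_contra hc
        push_neg at hc
        exact hw (funext hc)
      obtain ⟨θ0, hθ0⟩ := hne
      have hMpos : 0 < M := lt_of_lt_of_le (hpos θ0 hθ0 i)
        (le_trans (le_abs_self _) (le_trans (norm_le_pi_norm θ0 i) (hM θ0 hθ0)))
      have key : ∀ θ ∈ Θ, w i ^ 2 / M ≤ F w θ := by
        intro θ hθ
        have hθiM : θ i ≤ M := le_trans (le_abs_self _) (le_trans (norm_le_pi_norm θ i) (hM θ hθ))
        have : w i ^ 2 / M ≤ w i ^ 2 / θ i :=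
          div_le_div_of_nonneg_left (sq_nonneg _) (hpos θ hθ i) hθiM
        refine le_trans this ?_
        exact Finset.single_le_sum (fun j _ => div_nonneg (sq_nonneg _) (hpos θ hθ j).le)
          (Finset.mem_univ i)
      have hinfpos : 0 < ⨅ θ : Θ, F w θ :=
        lt_of_lt_of_le (by positivity) (le_ciInf fun θ => key θ θ.2)
      rw [hTN] at h
      have hspos : 0 < Real.sqrt (⨅ θ : Θ, F w θ) := Real.sqrt_pos.mpr hinfpos
      exact absurd h hspos.ne'
    · rintro rfl
      rw [hTN]
      have : ∀ θ : Θ, F (0 : Fin d → ℝ) θ = 0 := by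
        intro θ; simp [hF]
      rw [show (⨅ θ : Θ, F (0 : Fin d → ℝ) θ) = 0 by rw [iInf_congr this]; exact ciInf_const]
      exact Real.sqrt_zero
  · -- homogeneity
    intro a w
    rw [hTN, hTN]
    have : ∀ θ : Θ, F (a • w) θ = a ^ 2 * F w θ := by
      intro θ
      simp only [hF, Finset.mul_sum, Pi.smul_apply, smul_eq_mul]
      exact Finset.sum_congr rfl fun i _ => by ring
    rw [iInf_congr this, ← Real.mul_iInf_of_nonneg (sq_nonneg a),
      Real.sqrt_mul (sq_nonneg a), Real.sqrt_sq_eq_abs]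
  · -- triangle inequality
    intro v w
    refine le_of_forall_pos_le_add fun η hη => ?_
    set ε : ℝ := (η / 2) ^ 2 with hε
    have hεpos : 0 < ε := by positivity
    have fv := hinf_nonneg v
    have fw := hinf_nonneg w
    -- choose near-optimal θ1, θ2
    obtain ⟨θ1, hθ1⟩ := exists_lt_of_ciInf_lt (lt_add_of_pos_right (⨅ θ : Θ, F v θ) hεpos)
    obtain ⟨θ2, hθ2⟩ := exists_lt_of_ciInf_lt (lt_add_of_pos_right (⨅ θ : Θ, F w θ) hεpos)
    set A := F v θ1 with hA
    set B := F w θ2 with hB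
    have hAnn : 0 ≤ A := hFnonneg v θ1 θ1.2
    have hBnn : 0 ≤ B := hFnonneg w θ2 θ2.2
    have main : Real.sqrt (⨅ θ : Θ, F (v + w) θ) ≤ Real.sqrt A + Real.sqrt B := by
      rcases eq_or_lt_of_le hAnn with hA0 | hApos
      · -- A = 0, so v = 0
        have hv : v = 0 := by
          funext i
          have hsum := (Finset.sum_eq_zero_iff_of_nonneg
            (fun j (_ : j ∈ Finset.univ) => div_nonneg (sq_nonneg (v j)) (hpos θ1 θ1.2 j).le)).mp
            hA0.symm i (Finset.mem_univ i)
          have := (div_eq_zero_iff.mp hsum).resolve_right (hpos θ1 θ1.2 i).ne'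
          exact pow_eq_zero_iff (n := 2) (by norm_num) |>.mp this
        have : (⨅ θ : Θ, F (v + w) θ) ≤ B := by
          have : F (v + w) θ2 = B := by rw [hv]; simp [hB]
          rw [← this]
          exact hinf_le _ θ2 θ2.2
        calc Real.sqrt (⨅ θ : Θ, F (v + w) θ) ≤ Real.sqrt B := Real.sqrt_le_sqrt this
          _ ≤ Real.sqrt A + Real.sqrt B := le_add_of_nonneg_left (Real.sqrt_nonneg _)
      rcases eq_or_lt_of_le hBnn with hB0 | hBpos
      · have hw0 : w = 0 := by
          funext i
          have hsum := (Finset.sum_eq_zero_iff_of_nonneg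
            (fun j (_ : j ∈ Finset.univ) => div_nonneg (sq_nonneg (w j)) (hpos θ2 θ2.2 j).le)).mp
            hB0.symm i (Finset.mem_univ i)
          have := (div_eq_zero_iff.mp hsum).resolve_right (hpos θ2 θ2.2 i).ne'
          exact pow_eq_zero_iff (n := 2) (by norm_num) |>.mp this
        have : (⨅ θ : Θ, F (v + w) θ) ≤ A := by
          have : F (v + w) θ1 = A := by rw [hw0]; simp [hA]
          rw [← this]
          exact hinf_le _ θ1 θ1.2
        calc Real.sqrt (⨅ θ : Θ, F (v + w) θ) ≤ Real.sqrt A := Real.sqrt_le_sqrt this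
          _ ≤ Real.sqrt A + Real.sqrt B := le_add_of_nonneg_right (Real.sqrt_nonneg _)
      -- main case: A > 0 and B > 0
      have hsA : 0 < Real.sqrt A := Real.sqrt_pos.mpr hApos
      have hsB : 0 < Real.sqrt B := Real.sqrt_pos.mpr hBpos
      set t : ℝ := Real.sqrt A / (Real.sqrt A + Real.sqrt B) with ht
      have hden : 0 < Real.sqrt A + Real.sqrt B := by positivity
      have htpos : 0 < t := by positivity
      have h1t : 1 - t = Real.sqrt B / (Real.sqrt A + Real.sqrt B) := by
        rw [ht]; field_simp; ring
      have h1tpos : 0 < 1 - t := by rw [h1t]; positivity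
      have hθmem : (t • (θ1 : Fin d → ℝ) + (1 - t) • (θ2 : Fin d → ℝ)) ∈ Θ :=
        hconv θ1.2 θ2.2 htpos.le h1tpos.le (by ring)
      have hbound : F (v + w) (t • (θ1 : Fin d → ℝ) + (1 - t) • (θ2 : Fin d → ℝ))
          ≤ A / t + B / (1 - t) := by
        have step : ∀ i, (v i + w i) ^ 2 / (t * θ1.1 i + (1 - t) * θ2.1 i)
            ≤ (v i) ^ 2 / (t * θ1.1 i) + (w i) ^ 2 / ((1 - t) * θ2.1 i) := fun i =>
          engel_aux _ _ _ _ (mul_pos htpos (hpos θ1 θ1.2 i)) (mul_pos h1tpos (hpos θ2 θ2.2 i))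
        calc F (v + w) (t • (θ1 : Fin d → ℝ) + (1 - t) • (θ2 : Fin d → ℝ))
            = ∑ i, (v i + w i) ^ 2 / (t * θ1.1 i + (1 - t) * θ2.1 i) := by
              simp [hF, Pi.add_apply, Pi.smul_apply, smul_eq_mul]
          _ ≤ ∑ i, ((v i) ^ 2 / (t * θ1.1 i) + (w i) ^ 2 / ((1 - t) * θ2.1 i)) :=
              Finset.sum_le_sum fun i _ => step i
          _ = A / t + B / (1 - t) := by
              rw [Finset.sum_add_distrib, hA, hB, hF]
              simp only [Finset.sum_div]
              congr 1 <;> exact Finset.sum_congr rfl fun i _ => by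
                rw [div_div _ _ _ |>.symm]; ring_nf
      have e1 : A / t = (Real.sqrt A + Real.sqrt B) * Real.sqrt A := by
        rw [ht, div_div_eq_mul_div, mul_comm A, mul_div_assoc, Real.div_sqrt]
      have e2 : B / (1 - t) = (Real.sqrt A + Real.sqrt B) * Real.sqrt B := by
        rw [h1t, div_div_eq_mul_div, mul_comm B, mul_div_assoc, Real.div_sqrt]
      have hABt : A / t + B / (1 - t) = (Real.sqrt A + Real.sqrt B) ^ 2 := by
        rw [e1, e2]; ring
      have : (⨅ θ : Θ, F (v + w) θ) ≤ (Real.sqrt A + Real.sqrt B) ^ 2 :=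
        le_trans (hinf_le _ _ hθmem) (hABt ▸ hbound)
      calc Real.sqrt (⨅ θ : Θ, F (v + w) θ)
          ≤ Real.sqrt ((Real.sqrt A + Real.sqrt B) ^ 2) := Real.sqrt_le_sqrt this
        _ = Real.sqrt A + Real.sqrt B := Real.sqrt_sq hden.le
    have hAle : Real.sqrt A ≤ Real.sqrt (⨅ θ : Θ, F v θ) + η / 2 := by
      calc Real.sqrt A ≤ Real.sqrt ((⨅ θ : Θ, F v θ) + ε) := Real.sqrt_le_sqrt hθ1.le
        _ ≤ Real.sqrt (⨅ θ : Θ, F v θ) + Real.sqrt ε := sqrt_add_le_aux _ _ fv hεpos.le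
        _ = Real.sqrt (⨅ θ : Θ, F v θ) + η / 2 := by
            rw [hε, Real.sqrt_sq (by positivity)]
    have hBle : Real.sqrt B ≤ Real.sqrt (⨅ θ : Θ, F w θ) + η / 2 := by
      calc Real.sqrt B ≤ Real.sqrt ((⨅ θ : Θ, F w θ) + ε) := Real.sqrt_le_sqrt hθ2.le
        _ ≤ Real.sqrt (⨅ θ : Θ, F w θ) + Real.sqrt ε := sqrt_add_le_aux _ _ fw hεpos.le
        _ = Real.sqrt (⨅ θ : Θ, F w θ) + η / 2 := by
            rw [hε, Real.sqrt_sq (by positivity)]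
    rw [hTN, hTN, hTN]
    linarith [main, hAle, hBle]
  · -- permutation invariance
    intro w σ
    rw [hTN, hTN]
    congr 1
    apply le_antisymm
    · refine le_ciInf fun θ => ?_
      have hmem : ((θ : Fin d → ℝ) ∘ σ) ∈ Θ := hperm σ θ θ.2
      have : F (w ∘ σ) ((θ : Fin d → ℝ) ∘ σ) = F w θ := by
        simp only [hF, Function.comp_apply]
        exact Fintype.sum_equiv σ _ _ fun i => rfl
      exact this ▸ hinf_le (w ∘ σ) _ hmem
    · refine le_ciInf fun θ => ?_
      have hmem : ((θ : Fin d → ℝ) ∘ (σ⁻¹ : Equiv.Perm (Fin d))) ∈ Θ := hperm σ⁻¹ θ θ.2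
      have : F w ((θ : Fin d → ℝ) ∘ (σ⁻¹ : Equiv.Perm (Fin d))) = F (w ∘ σ) θ := by
        simp only [hF, Function.comp_apply]
        refine (Fintype.sum_equiv σ _ _ fun i => ?_).symm
        simp
      exact this ▸ hinf_le w _ hmem
  · -- sign invariance
    intro w ε hεpm
    rw [hTN, hTN]
    congr 1
    refine iInf_congr fun θ => Finset.sum_congr rfl fun i _ => ?_
    show (ε i * w i) ^ 2 / (θ : Fin d → ℝ) i = w i ^ 2 / (θ : Fin d → ℝ) i
    rcases hεpm i with h | h <;> rw [h] <;> ring
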